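/- Let 0 < α ≤ 1, let z be a real number with z > 1, regarded as a complex number, and let ω = exp(2πi/3) ∈ ℂ. Then ∑_{n=0}^{∞} Γ(3n+1+α)/(Γ(α)·Γ(3n+2))·z^{−n} = (z^{1/3}/3)·((1−z^{−1/3})^{−α} + ω²·(1−ω·z^{−1/3})^{−α} + ω·(1−ω²·z^{−1/3})^{−α}), where z^{±1/3} is the real power of z and the complex powers (·)^{−α} are principal-branch complex powers; in particular the right-hand side is real. -/

import Mathlib

open Complex

private noncomputable def bc (α : ℝ) (n : ℕ) : ℝ :=
  Real.Gamma (n + α) / (Real.Gamma α * Real.Gamma (n + 1))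

private lemma bc_pos {α : ℝ} (hα : 0 < α) (n : ℕ) : 0 < bc α n := by
  have h1 : (0:ℝ) < (n:ℝ) + α := by positivity
  have h2 : (0:ℝ) < (n:ℝ) + 1 := by positivity
  exact div_pos (Real.Gamma_pos_of_pos h1)
    (mul_pos (Real.Gamma_pos_of_pos hα) (Real.Gamma_pos_of_pos h2))

private lemma bc_zero {α : ℝ} (hα : 0 < α) : bc α 0 = 1 := by
  have hΓ : Real.Gamma α ≠ 0 := (Real.Gamma_pos_of_pos hα).ne'
  simp [bc, Real.Gamma_one, hΓ]

private lemma bc_succ {α : ℝ} (hα : 0 < α) (n : ℕ) :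
    bc α (n + 1) = bc α n * (((n:ℝ) + α) / ((n:ℝ) + 1)) := by
  have h1 : ((n:ℝ) + α) ≠ 0 := by positivity
  have h2 : ((n:ℝ) + 1) ≠ 0 := by positivity
  have e1 : ((n + 1 : ℕ) : ℝ) + α = ((n:ℝ) + α) + 1 := by push_cast; ring
  have e2 : ((n + 1 : ℕ) : ℝ) + 1 = ((n:ℝ) + 1) + 1 := by push_cast; ring
  have hΓα : Real.Gamma α ≠ 0 := (Real.Gamma_pos_of_pos hα).ne'
  have hΓn : Real.Gamma ((n:ℝ) + 1) ≠ 0 :=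
    (Real.Gamma_pos_of_pos (by positivity)).ne'
  rw [bc, bc, e1, e2, Real.Gamma_add_one h1, Real.Gamma_add_one h2]
  field_simp

private lemma bc_le_one {α : ℝ} (hα : 0 < α) (hα' : α ≤ 1) (n : ℕ) : bc α n ≤ 1 := by
  induction n with
  | zero => rw [bc_zero hα]
  | succ m ih =>
    rw [bc_succ hα]
    have h1 : ((m:ℝ) + α) / ((m:ℝ) + 1) ≤ 1 := by
      rw [div_le_one (by positivity)]; linarith
    have h2 : (0:ℝ) ≤ ((m:ℝ) + α) / ((m:ℝ) + 1) := by positivity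
    calc bc α m * (((m:ℝ) + α) / ((m:ℝ) + 1)) ≤ 1 * 1 :=
          mul_le_mul ih h1 h2 zero_le_one
      _ = 1 := by ring

private lemma hasSum_congr' {f g : ℕ → ℂ} {a : ℂ} (H : HasSum f a)
    (h : ∀ n, f n = g n) : HasSum g a := (funext h : f = g) ▸ H

private lemma aux_summable {r : ℝ} (hr0 : 0 ≤ r) (hr1 : r < 1) :
    Summable (fun n : ℕ => (n:ℝ) * r ^ (n - 1)) := by
  rw [← summable_nat_add_iff 1]
  have h1 : Summable (fun n : ℕ => (n:ℝ) ^ 1 * r ^ n) :=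
    summable_pow_mul_geometric_of_norm_lt_one 1 (by rwa [Real.norm_of_nonneg hr0])
  have h2 : Summable (fun n : ℕ => r ^ n) := summable_geometric_of_lt_one hr0 hr1
  apply (h1.add h2).congr
  intro n
  push_cast [Nat.add_sub_cancel]
  ring

set_option maxHeartbeats 1000000 in
private lemma binom_hasSum {α : ℝ} (hα : 0 < α) (hα' : α ≤ 1) {x : ℂ} (hx : ‖x‖ < 1) :
    HasSum (fun n : ℕ => ((bc α n : ℝ) : ℂ) * x ^ n) ((1 - x) ^ (-(α:ℂ))) := by
  -- basic summability
  have hsum : ∀ y : ℂ, ‖y‖ < 1 → Summable (fun n : ℕ => ((bc α n : ℝ) : ℂ) * y ^ n) := by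
    intro y hy
    apply Summable.of_norm_bounded (summable_geometric_of_lt_one (norm_nonneg y) hy)
    intro n
    rw [norm_mul, norm_pow, Complex.norm_real, Real.norm_of_nonneg (bc_pos hα n).le]
    calc bc α n * ‖y‖ ^ n ≤ 1 * ‖y‖ ^ n := by
          apply mul_le_mul_of_nonneg_right (bc_le_one hα hα' n) (by positivity)
      _ = ‖y‖ ^ n := one_mul _
  have hsum' : ∀ y : ℂ, ‖y‖ < 1 →
      Summable (fun n : ℕ => ((bc α n : ℝ) : ℂ) * n * y ^ (n - 1)) := by
    intro y hy
    apply Summable.of_norm_bounded (aux_summable (norm_nonneg y) hy)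
    intro n
    rw [norm_mul, norm_mul, norm_pow, Complex.norm_real,
      Real.norm_of_nonneg (bc_pos hα n).le, Complex.norm_natCast]
    calc bc α n * (n:ℝ) * ‖y‖ ^ (n-1) ≤ 1 * (n:ℝ) * ‖y‖ ^ (n-1) := by
          apply mul_le_mul_of_nonneg_right
            (mul_le_mul_of_nonneg_right (bc_le_one hα hα' n) (by positivity)) (by positivity)
      _ = (n:ℝ) * ‖y‖ ^ (n-1) := by ring
  set F : ℂ → ℂ := fun y => ∑' n : ℕ, ((bc α n : ℝ) : ℂ) * y ^ n with hF
  set F' : ℂ → ℂ := fun y => ∑' n : ℕ, ((bc α n : ℝ) : ℂ) * n * y ^ (n - 1) with hF'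
  -- differentiability
  have hderiv : ∀ y : ℂ, ‖y‖ < 1 → HasDerivAt F (F' y) y := by
    intro y hy
    set r : ℝ := (‖y‖ + 1) / 2 with hrdef
    have hr0 : 0 < r := by positivity
    have hyr : ‖y‖ < r := by rw [hrdef]; linarith
    have hr1 : r < 1 := by rw [hrdef]; linarith
    have hymem : y ∈ Metric.ball (0:ℂ) r := by rwa [Metric.mem_ball, dist_zero_right]
    exact hasDerivAt_tsum_of_isPreconnected
      (g' := fun (n : ℕ) (z : ℂ) => ((bc α n : ℝ) : ℂ) * n * z ^ (n - 1))
      (aux_summable hr0.le hr1)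
      (Metric.isOpen_ball) ((convex_ball (0:ℂ) r).isPreconnected)
      (fun n z _ => by
        simpa [mul_assoc] using (hasDerivAt_pow n z).const_mul ((bc α n : ℝ) : ℂ))
      (fun n z hz => by
        rw [Metric.mem_ball, dist_zero_right] at hz
        rw [norm_mul, norm_mul, norm_pow, Complex.norm_real,
          Real.norm_of_nonneg (bc_pos hα n).le, Complex.norm_natCast]
        have hb1 : bc α n * (n:ℝ) * ‖z‖ ^ (n-1) ≤ 1 * (n:ℝ) * r ^ (n-1) := by
          apply mul_le_mul
          · exact mul_le_mul_of_nonneg_right (bc_le_one hα hα' n) (by positivity)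
          · exact pow_le_pow_left₀ (norm_nonneg z) hz.le _
          · positivity
          · positivity
        linarith)
      hymem (hsum y hy) hymem
  -- the ODE
  have hode : ∀ y : ℂ, ‖y‖ < 1 → (1 - y) * F' y = (α:ℂ) * F y := by
    intro y hy
    have h1 : HasSum (fun n : ℕ => ((bc α n : ℝ) : ℂ) * n * y ^ (n - 1)) (F' y) :=
      (hsum' y hy).hasSum
    have h2 : HasSum (fun n : ℕ => ((bc α (n+1) : ℝ) : ℂ) * ((n:ℂ)+1) * y ^ n) (F' y) := by
      have h2' : HasSum
          (fun n : ℕ => ((bc α (n+1) : ℝ) : ℂ) * ((n+1 : ℕ):ℂ) * y ^ ((n+1) - 1)) (F' y) := by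
        refine (hasSum_nat_add_iff
          (f := fun n : ℕ => ((bc α n : ℝ) : ℂ) * n * y ^ (n - 1)) 1).2 ?_
        simpa using h1
      refine hasSum_congr' h2' fun n => ?_
      rw [Nat.add_sub_cancel]
      push_cast
      ring
    have h4 : HasSum (fun n : ℕ => ((bc α n : ℝ) : ℂ) * ((n:ℂ) + α) * y ^ n) (F' y) := by
      refine hasSum_congr' h2 fun n => ?_
      have hr : bc α (n+1) * ((n:ℝ) + 1) = bc α n * ((n:ℝ) + α) := by
        rw [bc_succ hα]
        field_simp
      have hc : ((bc α (n+1) : ℝ) : ℂ) * ((n:ℂ) + 1) = ((bc α n : ℝ) : ℂ) * ((n:ℂ) + α) := by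
        exact_mod_cast hr
      rw [hc]
    have h5 : HasSum (fun n : ℕ => ((bc α n : ℝ) : ℂ) * n * y ^ n) (y * F' y) := by
      refine hasSum_congr' (h1.mul_left y) fun n => ?_
      show y * (((bc α n : ℝ) : ℂ) * n * y ^ (n - 1)) = _
      cases n with
      | zero => simp
      | succ m => rw [Nat.add_sub_cancel, pow_succ]; ring
    have h6 : HasSum (fun n : ℕ => (α:ℂ) * (((bc α n : ℝ) : ℂ) * y ^ n)) ((α:ℂ) * F y) :=
      (hsum y hy).hasSum.mul_left _
    have h7 := h5.add h6
    have h8 : F' y = y * F' y + (α:ℂ) * F y := by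
      refine h4.unique (hasSum_congr' h7 fun n => ?_)
      push_cast
      ring
    linear_combination h8
  -- constancy of (1-y)^α * F y
  have key : ∀ y : ℂ, ‖y‖ < 1 → (1 - y) ^ (α:ℂ) * F y = 1 := by
    have hΦ : ∀ y ∈ Metric.ball (0:ℂ) 1,
        HasDerivAt (fun w => (1 - w) ^ (α:ℂ) * F w) 0 y := by
      intro y hy
      rw [Metric.mem_ball, dist_zero_right] at hy
      have hslit : (1 - y) ∈ slitPlane := by
        have := mem_slitPlane_of_norm_lt_one (z := -y) (by rwa [norm_neg])
        simpa [sub_eq_add_neg] using this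
      have hne : (1 - y) ≠ 0 := slitPlane_ne_zero hslit
      have hA : HasDerivAt (fun w : ℂ => (1 - w) ^ (α:ℂ))
          ((α:ℂ) * (1 - y) ^ ((α:ℂ) - 1) * (-1)) y :=
        HasDerivAt.cpow_const ((hasDerivAt_id y).const_sub 1) hslit
      have hB := hderiv y hy
      have hAB := hA.mul hB
      have hval : (α:ℂ) * (1 - y) ^ ((α:ℂ) - 1) * (-1) * F y + (1 - y) ^ (α:ℂ) * F' y
          = 0 := by
        have e1 : (1 - y) ^ (α:ℂ) = (1 - y) ^ ((α:ℂ) - 1) * (1 - y) := by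
          have e2 := Complex.cpow_add ((α:ℂ) - 1) 1 hne
          rw [Complex.cpow_one] at e2
          rw [← e2]
          congr 1
          ring
        rw [e1]
        have := hode y hy
        linear_combination (1 - y) ^ ((α:ℂ) - 1) * this
      rwa [hval] at hAB
    intro y hy
    have hball : Convex ℝ (Metric.ball (0:ℂ) 1) := convex_ball _ _
    have h0mem : (0:ℂ) ∈ Metric.ball (0:ℂ) 1 := by simp
    have hymem : y ∈ Metric.ball (0:ℂ) 1 := by rwa [Metric.mem_ball, dist_zero_right]
    have hzero : ContinuousLinearMap.toSpanSingleton ℂ (0:ℂ) = 0 := by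
      ext; simp
    have hbound := hball.norm_image_sub_le_of_norm_hasFDerivWithin_le
      (f := fun w => (1 - w) ^ (α:ℂ) * F w)
      (f' := fun _ => (0 : ℂ →L[ℝ] ℂ)) (C := 0)
      (fun w hw => by
        have := ((hΦ w hw).hasFDerivAt.restrictScalars ℝ).hasFDerivWithinAt
          (s := Metric.ball (0:ℂ) 1)
        rwa [hzero, ContinuousLinearMap.restrictScalars_zero] at this)
      (fun w _ => by simp) h0mem hymem
    simp only [zero_mul, norm_le_zero_iff, sub_eq_zero] at hbound
    rw [hbound]
    have hF0 : F 0 = 1 := by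
      have hs : HasSum (fun n : ℕ => ((bc α n : ℝ) : ℂ) * (0:ℂ) ^ n)
          (((bc α 0 : ℝ) : ℂ) * (0:ℂ) ^ 0) :=
        hasSum_single 0 (fun n hn => by
          rw [zero_pow hn, mul_zero])
      show (∑' n : ℕ, ((bc α n : ℝ) : ℂ) * (0:ℂ) ^ n) = 1
      rw [hs.tsum_eq, pow_zero, mul_one, bc_zero hα, Complex.ofReal_one]
    rw [hF0, sub_zero, one_cpow, mul_one]
  -- conclude
  have h := key x hx
  have hne : (1 - x) ≠ 0 := by
    intro h0
    have : x = 1 := by linear_combination -h0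
    rw [this] at hx; simp at hx
  have hcne : (1 - x) ^ (α:ℂ) ≠ 0 := by
    rw [Ne, Complex.cpow_eq_zero_iff]
    tauto
  have hFx : F x = (1 - x) ^ (-(α:ℂ)) := by
    rw [Complex.cpow_neg]
    field_simp
    linear_combination h
  have hs := (hsum x hx).hasSum
  have heq : (∑' n : ℕ, ((bc α n : ℝ) : ℂ) * x ^ n) = (1 - x) ^ (-(α:ℂ)) := hFx
  rwa [heq] at hs

/-- Z-transform of the subsequence `n ↦ φ̃_α(3n+1)` for `0 < α ≤ 1`, `z > 1`,
with `ω = exp(2πi/3)`: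
`∑ₙ Γ(3n+1+α)/(Γ(α)·Γ(3n+2))·z^(-n)
  = (z^(1/3)/3)·((1-z^(-1/3))^(-α) + ω²·(1-ω·z^(-1/3))^(-α) + ω·(1-ω²·z^(-1/3))^(-α))`,
the sum of real terms being taken in `ℂ`, so in particular the RHS is real. -/
theorem ztransform_phi_mod3_1 (α : ℝ) (hα : 0 < α) (hα' : α ≤ 1) (z : ℝ) (hz : 1 < z)
    (ω : ℂ) (hω : ω = Complex.exp (2 * (Real.pi : ℂ) * Complex.I / 3)) :
    HasSum (fun n : ℕ =>
        ((Real.Gamma (3 * (n : ℝ) + 1 + α) /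
            (Real.Gamma α * Real.Gamma (3 * (n : ℝ) + 2)) * z ^ (-(n : ℝ)) : ℝ) : ℂ))
      ((((z ^ ((1 / 3 : ℝ)) : ℝ) : ℂ) / 3) *
        ((1 - ((z ^ (-(1 / 3 : ℝ)) : ℝ) : ℂ)) ^ ((-α : ℝ) : ℂ)
          + ω ^ 2 * (1 - ω * ((z ^ (-(1 / 3 : ℝ)) : ℝ) : ℂ)) ^ ((-α : ℝ) : ℂ)
          + ω * (1 - ω ^ 2 * ((z ^ (-(1 / 3 : ℝ)) : ℝ) : ℂ)) ^ ((-α : ℝ) : ℂ))) := by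
  have hz0 : (0:ℝ) < z := by linarith
  set w : ℝ := z ^ (-(1 / 3 : ℝ)) with hwdef
  have hw0 : 0 < w := Real.rpow_pos_of_pos hz0 _
  have hw1 : w < 1 := Real.rpow_lt_one_of_one_lt_of_neg hz (by norm_num)
  -- facts about ω
  have hω3 : ω ^ 3 = 1 := by
    rw [hω, ← Complex.exp_nat_mul,
      show ((3:ℕ):ℂ) * (2 * (Real.pi : ℂ) * Complex.I / 3) = 2 * (Real.pi : ℂ) * Complex.I by
        push_cast; ring]
    exact Complex.exp_two_pi_mul_I
  have hωne1 : ω ≠ 1 := by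
    intro h1
    rw [hω, Complex.exp_eq_one_iff] at h1
    obtain ⟨n, hn⟩ := h1
    have hπ : (2 * (Real.pi : ℂ) * Complex.I) ≠ 0 := by
      simp [Real.pi_ne_zero, Complex.I_ne_zero]
    have h4 : ((3 * n : ℤ) : ℂ) * (2 * (Real.pi : ℂ) * Complex.I)
        = 1 * (2 * (Real.pi : ℂ) * Complex.I) := by
      push_cast
      linear_combination (-3 : ℂ) * hn
    have h5 := mul_right_cancel₀ hπ h4
    have : (3 * n : ℤ) = 1 := by exact_mod_cast h5
    omega
  have hωsum : 1 + ω + ω ^ 2 = 0 := by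
    have h : (ω - 1) * (1 + ω + ω ^ 2) = ω ^ 3 - 1 := by ring
    rw [hω3, sub_self] at h
    rcases mul_eq_zero.mp h with h1 | h2
    · exact absurd (by linear_combination h1) hωne1
    · exact h2
  have hnormω : ‖ω‖ = 1 := by
    rw [hω, Complex.norm_exp,
      show (2 * (Real.pi : ℂ) * Complex.I / 3) = ((2 * Real.pi / 3 : ℝ) : ℂ) * Complex.I by
        push_cast; ring]
    simp
  -- the three binomial series
  have hnorm : ∀ j : ℕ, ‖ω ^ j * (w:ℂ)‖ < 1 := by
    intro j
    rw [norm_mul, norm_pow, hnormω, one_pow, one_mul, Complex.norm_real,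
      Real.norm_of_nonneg hw0.le]
    exact hw1
  have hA := binom_hasSum hα hα' (x := ((w:ℝ):ℂ)) (by
    rw [Complex.norm_real, Real.norm_of_nonneg hw0.le]; exact hw1)
  have hB := binom_hasSum hα hα' (x := ω * (w:ℂ)) (by simpa using hnorm 1)
  have hC := binom_hasSum hα hα' (x := ω ^ 2 * (w:ℂ)) (hnorm 2)
  set G : ℂ := (((1 - (w:ℂ)) ^ (-(α:ℂ)) + ω ^ 2 * (1 - ω * (w:ℂ)) ^ (-(α:ℂ)))
      + ω * (1 - ω ^ 2 * (w:ℂ)) ^ (-(α:ℂ))) / 3 with hGdef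
  have hsum3 := ((hA.add (hB.mul_left (ω ^ 2))).add (hC.mul_left ω)).div_const 3
  -- termwise simplification to the indicator series
  set t : ℕ → ℂ := fun n => if n % 3 = 1 then ((bc α n : ℝ) : ℂ) * (w:ℂ) ^ n else 0 with htdef
  have ht : HasSum t G := by
    refine hasSum_congr' hsum3 fun n => ?_
    have hu : ω ^ n = ω ^ (n % 3) := by
      conv_lhs => rw [← Nat.div_add_mod n 3]
      rw [pow_add, pow_mul, hω3, one_pow, one_mul]
    have hsq : (ω ^ 2) ^ n = (ω ^ n) ^ 2 := by
      rw [← pow_mul, ← pow_mul, mul_comm]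
    have hmod : n % 3 = 0 ∨ n % 3 = 1 ∨ n % 3 = 2 := by omega
    rcases hmod with hm | hm | hm <;>
      simp only [htdef, mul_pow, hsq, hu, hm, pow_zero, pow_one, one_pow] <;>
      norm_num
    · linear_combination (((bc α n : ℝ) : ℂ) * (w:ℂ) ^ n) * hωsum
    · linear_combination (2 / 3 * ((bc α n : ℝ) : ℂ) * (w:ℂ) ^ n) * hω3
    · linear_combination (((bc α n : ℝ) : ℂ) * (w:ℂ) ^ n) * hωsum
        + (((bc α n : ℝ) : ℂ) * (w:ℂ) ^ n) * (ω + ω ^ 2) * hω3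
  -- extract the subsequence n = 3m+1
  have hinj : Function.Injective (fun m : ℕ => 3 * m + 1) := by
    intro a b h
    have h' : 3 * a + 1 = 3 * b + 1 := h
    omega
  have hvanish : ∀ n ∉ Set.range (fun m : ℕ => 3 * m + 1), t n = 0 := by
    intro n hn
    rw [htdef]
    have : n % 3 ≠ 1 := by
      intro h
      exact hn ⟨n / 3, by change 3 * (n / 3) + 1 = n; omega⟩
    simp [this]
  have ht' : HasSum (t ∘ fun m : ℕ => 3 * m + 1) G :=
    (Function.Injective.hasSum_iff hinj hvanish).2 ht
  have hfinal := ht'.mul_left (((z ^ ((1 / 3 : ℝ)) : ℝ) : ℂ))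
  -- identify the values
  have hval : ((((z ^ ((1 / 3 : ℝ)) : ℝ) : ℂ)) / 3) *
      ((1 - (w:ℂ)) ^ ((-α : ℝ) : ℂ) + ω ^ 2 * (1 - ω * (w:ℂ)) ^ ((-α : ℝ) : ℂ)
        + ω * (1 - ω ^ 2 * (w:ℂ)) ^ ((-α : ℝ) : ℂ))
      = (((z ^ ((1 / 3 : ℝ)) : ℝ) : ℂ)) * G := by
    rw [hGdef]
    have : ((-α : ℝ) : ℂ) = -(α:ℂ) := by push_cast; ring
    rw [this]
    ring
  rw [hval]
  refine hasSum_congr' hfinal fun m => ?_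
  show (((z ^ ((1 / 3 : ℝ)) : ℝ) : ℂ)) * t (3 * m + 1) = _
  have hmem : (3 * m + 1) % 3 = 1 := by omega
  rw [htdef]
  simp only [hmem, if_pos]
  -- now a real computation
  have hkey : z ^ ((1 / 3 : ℝ)) * w ^ (3 * m + 1) = z ^ (-(m:ℝ)) := by
    have h1 : w ^ (3 * m + 1) = z ^ ((-(1/3 : ℝ)) * ((3 * m + 1 : ℕ) : ℝ)) := by
      rw [hwdef, Real.rpow_mul hz0.le, Real.rpow_natCast]
    rw [h1, ← Real.rpow_add hz0]
    congr 1
    push_cast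
    ring
  have hbc : bc α (3 * m + 1) =
      Real.Gamma (3 * (m:ℝ) + 1 + α) / (Real.Gamma α * Real.Gamma (3 * (m:ℝ) + 2)) := by
    rw [bc]
    congr 2 <;> push_cast <;> ring
  rw [← Complex.ofReal_pow, ← Complex.ofReal_mul, ← Complex.ofReal_mul]
  rw [show (z ^ ((1 / 3 : ℝ)) * (bc α (3 * m + 1) * w ^ (3 * m + 1)))
      = bc α (3 * m + 1) * (z ^ ((1 / 3 : ℝ)) * w ^ (3 * m + 1)) by ring, hkey, hbc]
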